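/- Let 𝒜 be an incomplete pairwise comparison matrix on n alternatives with connected graph G, let {x*_ij} be an optimal solution of Problem 1, and let ε > 0. A point y* ∈ ℝⁿ satisfying the constraints of Problem 2 is a global optimum of Problem 2 if and only if there exists an n×n matrix Λ* of Lagrange multipliers such that: Λ*_ij ≥ 0 for all i,j; Λ*_ij = 0 whenever x*_ij = 0; Λ*_ij·(y*_j − y*_i + ε) = 0 for all i ≠ j with x*_ij = 1; and L y* = (1/2)(Λ* − Λ*ᵀ)1ₙ + r, where L is the graph Laplacian of G, 1ₙ is the all-ones vector, and r ∈ ℝⁿ has entries r_i = Σ_{j ∈ N_i} ln 𝒜_ij. -/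

import Mathlib

noncomputable section

/-- A feasible pairwise ordinal preference assignment. -/
def Feasible {n : ℕ} (x : Fin n → Fin n → ℝ) : Prop :=
  (∀ i j : Fin n, i ≠ j → (x i j = 0 ∨ x i j = 1)) ∧
  (∀ i j : Fin n, i ≠ j → x i j + x j i ≤ 1) ∧
  (∀ i j k : Fin n, i ≠ j → j ≠ k → i ≠ k → x i k * x k j ≤ x i j)

/-- The weighted ordinal satisfaction index `σ`, each unordered edge counted once
(half of the sum over ordered adjacent pairs, the summand being symmetric). -/
def sigmaIdx {n : ℕ} (G : SimpleGraph (Fin n)) [DecidableRel G.Adj]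
    (A : Fin n → Fin n → ℝ) (x : Fin n → Fin n → ℝ) : ℝ :=
  (1 / 2) * ∑ i : Fin n, ∑ j : Fin n,
    if G.Adj i j then Real.log (A i j) * (x i j - x j i) else 0

open scoped Classical in
/-- The tie index `τ`. -/
def tieIdx {n : ℕ} (G : SimpleGraph (Fin n)) [DecidableRel G.Adj]
    (A : Fin n → Fin n → ℝ) (δ : ℝ) (x : Fin n → Fin n → ℝ) : ℝ :=
  -(δ / 2) * ∑ i : Fin n, ∑ j : Fin n,
    if G.Adj i j ∧ A i j = 1 then x i j + x j i else 0

/-- The graph Laplacian of `G`: `L i i = deg i`, `L i j = -1` on edges, `0` elsewhere. -/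
def lap {n : ℕ} (G : SimpleGraph (Fin n)) [DecidableRel G.Adj] :
    Matrix (Fin n) (Fin n) ℝ :=
  Matrix.of fun i j =>
    if i = j then ((Finset.univ.filter fun k => G.Adj i k).card : ℝ)
    else if G.Adj i j then -1 else 0

/-- The objective of Problem 2: `Σ_i Σ_{j ∈ N_i} (ln 𝒜_ij − y_i + y_j)²`. -/
def lossLLS {n : ℕ} (G : SimpleGraph (Fin n)) [DecidableRel G.Adj]
    (A : Fin n → Fin n → ℝ) (y : Fin n → ℝ) : ℝ :=
  ∑ i : Fin n, ∑ j : Fin n,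
    if G.Adj i j then (Real.log (A i j) - y i + y j) ^ 2 else 0


open Finset

section Aux

/-- Conic Carathéodory: any nonnegative combination can be rewritten with linearly
independent support. -/
lemma carath_cone {H : Type*} [AddCommGroup H] [Module ℝ H]
    {ι : Type*} [Fintype ι] (v : ι → H) :
    ∀ (m : ℕ) (lam : ι → ℝ), (Finset.univ.filter fun k => lam k ≠ 0).card ≤ m →
      (∀ k, 0 ≤ lam k) →
      ∃ mu : ι → ℝ, (∀ k, 0 ≤ mu k) ∧ (∑ k, mu k • v k = ∑ k, lam k • v k) ∧
        LinearIndependent ℝ (fun k : {k // mu k ≠ 0} => v k) := by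
  classical
  intro m
  induction m with
  | zero =>
    intro lam hcard hnn
    have hempty : (Finset.univ.filter fun k => lam k ≠ 0) = ∅ := by
      exact Finset.card_eq_zero.mp (Nat.le_zero.mp hcard)
    have : IsEmpty {k // lam k ≠ 0} := by
      constructor
      rintro ⟨k, hk⟩
      have : k ∈ Finset.univ.filter fun k => lam k ≠ 0 := by simp [hk]
      simp [hempty] at this
    exact ⟨lam, hnn, rfl, linearIndependent_empty_type⟩
  | succ m ih =>
    intro lam hcard hnn
    by_cases hli : LinearIndependent ℝ (fun k : {k // lam k ≠ 0} => v k)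
    · exact ⟨lam, hnn, rfl, hli⟩
    · obtain ⟨cc, hccsum, k₀, hk₀⟩ := Fintype.not_linearIndependent_iff.mp hli
      -- extend to ι, with a positive entry
      obtain ⟨c, hcsum, hcpos, hczero⟩ :
          ∃ c : ι → ℝ, (∑ k, c k • v k = 0) ∧ (∃ k, 0 < c k) ∧
            (∀ k, lam k = 0 → c k = 0) := by
        set c0 : ι → ℝ := fun k => if h : lam k ≠ 0 then cc ⟨k, h⟩ else 0 with hc0
        have hsum0 : ∑ k, c0 k • v k = 0 := by
          rw [← hccsum]
          rw [← Finset.sum_filter_of_ne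
            (p := fun k => lam k ≠ 0) (s := Finset.univ) (f := fun k => c0 k • v k)
            (by intro k _ hk; by_contra hlk
                apply hk; simp [hc0, hlk]),
            Finset.sum_subtype (p := fun k => lam k ≠ 0) _ (fun k => by simp)
              (fun k => c0 k • v k)]
          refine Finset.sum_congr rfl fun k _ => ?_
          simp [hc0, k.2]
        have hc0k₀ : c0 k₀.1 = cc k₀ := by simp [hc0, k₀.2]
        rcases lt_or_gt_of_ne hk₀ with hneg | hpos
        · refine ⟨-c0, by simpa using hsum0, ⟨k₀.1, ?_⟩, fun k hk => by simp [hc0, hk]⟩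
          simp [hc0k₀]; linarith
        · exact ⟨c0, hsum0, ⟨k₀.1, by rw [hc0k₀]; exact hpos⟩,
            fun k hk => by simp [hc0, hk]⟩
      set T := Finset.univ.filter fun k => 0 < c k with hT
      have hTne : T.Nonempty := by
        obtain ⟨k, hk⟩ := hcpos
        exact ⟨k, by simp [hT, hk]⟩
      set t := T.inf' hTne fun k => lam k / c k with ht
      have htnn : 0 ≤ t := by
        apply Finset.le_inf'
        intro k hk
        simp only [hT, Finset.mem_filter] at hk
        exact div_nonneg (hnn k) hk.2.le
      obtain ⟨k₁, hk₁T, hk₁⟩ := Finset.exists_mem_eq_inf' hTne fun k => lam k / c k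
      have hck₁ : 0 < c k₁ := by simpa [hT] using hk₁T
      set mu : ι → ℝ := fun k => lam k - t * c k with hmu
      have hmunn : ∀ k, 0 ≤ mu k := by
        intro k
        by_cases hck : 0 < c k
        · have hmem : k ∈ T := by simp [hT, hck]
          have := Finset.inf'_le (fun k => lam k / c k) hmem
          rw [← ht] at this
          have := (le_div_iff₀ hck).mp this
          simp only [hmu]; linarith
        · push_neg at hck
          have : t * c k ≤ 0 := mul_nonpos_of_nonneg_of_nonpos htnn hck
          have := hnn k
          simp only [hmu]; linarith
      have hmusum : ∑ k, mu k • v k = ∑ k, lam k • v k := by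
        simp only [hmu, sub_smul, Finset.sum_sub_distrib, mul_smul]
        rw [← Finset.smul_sum, hcsum, smul_zero, sub_zero]
      have hlamk₁ : lam k₁ ≠ 0 := fun h => by
        have := hczero k₁ h; rw [this] at hck₁; exact lt_irrefl 0 hck₁
      have hmuk₁ : mu k₁ = 0 := by
        simp only [hmu]
        rw [ht, hk₁, div_mul_cancel₀ _ (ne_of_gt hck₁), sub_self]
      have hsub : (Finset.univ.filter fun k => mu k ≠ 0) ⊆
          (Finset.univ.filter fun k => lam k ≠ 0).erase k₁ := by
        intro k hk
        simp only [Finset.mem_filter, Finset.mem_univ, true_and] at hk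
        rw [Finset.mem_erase]
        constructor
        · rintro rfl; exact hk hmuk₁
        · simp only [Finset.mem_filter, Finset.mem_univ, true_and]
          intro hlk
          apply hk
          simp [hmu, hlk, hczero k hlk]
      have hcard' : (Finset.univ.filter fun k => mu k ≠ 0).card ≤ m := by
        have h1 := Finset.card_le_card hsub
        have hk₁mem : k₁ ∈ Finset.univ.filter fun k => lam k ≠ 0 := by
          simp [hlamk₁]
        rw [Finset.card_erase_of_mem hk₁mem] at h1
        omega
      obtain ⟨nu, h1, h2, h3⟩ := ih mu hcard' hmunn
      exact ⟨nu, h1, h2.trans hmusum, h3⟩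

open Finset

section FarkasCone

variable {N : ℕ} {ι : Type*} [Fintype ι]

/-- The finitely generated cone as a set. -/
def fgCone (v : ι → EuclideanSpace ℝ (Fin N)) : Set (EuclideanSpace ℝ (Fin N)) :=
  {x | ∃ lam : ι → ℝ, (∀ k, 0 ≤ lam k) ∧ ∑ k, lam k • v k = x}

lemma fgCone_isClosed (v : ι → EuclideanSpace ℝ (Fin N)) : IsClosed (fgCone v) := by
  classical
  -- linear map from coefficients supported on s
  let T : ∀ s : Finset ι, ((↥s → ℝ) →ₗ[ℝ] EuclideanSpace ℝ (Fin N)) := fun s =>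
    { toFun := fun lam => ∑ k : ↥s, lam k • v k
      map_add' := by intro a b; simp [add_smul, Finset.sum_add_distrib]
      map_smul' := by intro r a; simp [smul_smul, Finset.smul_sum] }
  let E : Finset ι → Set (EuclideanSpace ℝ (Fin N)) := fun s =>
    if LinearIndependent ℝ (fun k : ↥s => v k) then
      T s '' {lam | ∀ k, 0 ≤ lam k} else ∅
  have hEclosed : ∀ s, IsClosed (E s) := by
    intro s
    simp only [E]
    split_ifs with hli
    · have hker : LinearMap.ker (T s) = ⊥ := by
        rw [LinearMap.ker_eq_bot']
        intro lam hlam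
        funext k
        exact Fintype.linearIndependent_iff.mp hli lam hlam k
      have hclosed : IsClosed {lam : ↥s → ℝ | ∀ k, 0 ≤ lam k} := by
        have : {lam : ↥s → ℝ | ∀ k, 0 ≤ lam k} = ⋂ k, {lam | 0 ≤ lam k} :=
          Set.setOf_forall _
        rw [this]
        exact isClosed_iInter fun k =>
          isClosed_le continuous_const (continuous_apply k)
      exact ((T s).isClosedEmbedding_of_injective hker).isClosedMap _ hclosed
    · exact isClosed_empty
  have hunion : fgCone v = ⋃ s : Finset ι, E s := by
    ext x
    constructor
    · rintro ⟨lam, hnn, hsum⟩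
      obtain ⟨mu, hmunn, hmusum, hmuli⟩ :=
        carath_cone v (Finset.univ.filter fun k => lam k ≠ 0).card.succ lam
          (Nat.le_succ _) hnn
      set s : Finset ι := Finset.univ.filter fun k => mu k ≠ 0 with hs
      have hmem : ∀ k : ι, k ∈ s ↔ mu k ≠ 0 := fun k => by simp [hs]
      refine Set.mem_iUnion.mpr ⟨s, ?_⟩
      have hli : LinearIndependent ℝ (fun k : ↥s => v k) := by
        have h3 := hmuli.comp (Equiv.subtypeEquivRight hmem)
          (Equiv.subtypeEquivRight hmem).injective
        have h2 : ((fun k : {k // mu k ≠ 0} => v ↑k) ∘ ⇑(Equiv.subtypeEquivRight hmem))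
            = fun k : ↥s => (v ↑k) := by
          funext k; rfl
        rwa [h2] at h3
      simp only [E, if_pos hli]
      refine ⟨fun k => mu k, fun k => hmunn k, ?_⟩
      show ∑ k : ↥s, mu k • v k = x
      rw [Finset.sum_coe_sort s (fun k => mu k • v k), hs,
        Finset.sum_filter_of_ne (fun k _ hk => by
          by_contra h
          exact hk (by simp [h])),
        hmusum, hsum]
    · intro hx
      obtain ⟨s, hs⟩ := Set.mem_iUnion.mp hx
      simp only [E] at hs
      split_ifs at hs with hli
      · obtain ⟨lam, hnn, hsum⟩ := hs
        refine ⟨fun k => if h : k ∈ s then lam ⟨k, h⟩ else 0, fun k => ?_, ?_⟩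
        · dsimp only
          split_ifs with h
          · exact hnn ⟨k, h⟩
          · exact le_rfl
        · rw [← hsum]
          show (∑ k : ι, (if h : k ∈ s then lam ⟨k, h⟩ else 0) • v k) = _
          rw [← Finset.sum_subset (Finset.subset_univ s)
            (by intro k _ hk; simp [dif_neg hk])]
          rw [← Finset.sum_coe_sort s]
          refine Finset.sum_congr rfl fun k _ => ?_
          simp [k.2]
      · exact absurd hs (Set.notMem_empty x)
  rw [hunion]
  exact isClosed_iUnion_of_finite hEclosed

open scoped RealInnerProductSpace in
/-- Farkas' lemma. -/
lemma farkas_lemma (v : ι → EuclideanSpace ℝ (Fin N)) (g : EuclideanSpace ℝ (Fin N))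
    (h : ∀ d : EuclideanSpace ℝ (Fin N), (∀ k, 0 ≤ ⟪v k, d⟫) → 0 ≤ ⟪g, d⟫) :
    ∃ lam : ι → ℝ, (∀ k, 0 ≤ lam k) ∧ g = ∑ k, lam k • v k := by
  classical
  set C : ConvexCone ℝ (EuclideanSpace ℝ (Fin N)) :=
    { carrier := fgCone v
      smul_mem' := by
        rintro c hc x ⟨lam, hnn, hsum⟩
        exact ⟨fun k => c * lam k, fun k => mul_nonneg hc.le (hnn k), by
          simp only [mul_smul, ← Finset.smul_sum, hsum]⟩
      add_mem' := by
        rintro x ⟨lam, hnn, hsum⟩ y ⟨mu, hmn, hmsum⟩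
        exact ⟨fun k => lam k + mu k, fun k => add_nonneg (hnn k) (hmn k), by
          simp only [add_smul, Finset.sum_add_distrib, hsum, hmsum]⟩ } with hC
  have hne : (C : Set (EuclideanSpace ℝ (Fin N))).Nonempty :=
    ⟨0, ⟨fun _ => 0, fun _ => le_refl 0, by simp⟩⟩
  have hcl : IsClosed (C : Set (EuclideanSpace ℝ (Fin N))) := fgCone_isClosed v
  have hvC : ∀ k, v k ∈ C := by
    intro k
    refine ⟨fun j => if j = k then 1 else 0, fun j => by
      by_cases hj : j = k <;> simp [hj], ?_⟩
    simp [ite_smul]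
  by_contra hcon
  let K : ProperCone ℝ (EuclideanSpace ℝ (Fin N)) :=
    { carrier := fgCone v
      add_mem' := fun {x y} hx hy => C.add_mem hx hy
      zero_mem' := ⟨fun _ => 0, fun _ => le_refl 0, by simp⟩
      smul_mem' := by
        rintro c x ⟨lam, hnn, hsum⟩
        refine ⟨fun k => (c:ℝ) * lam k, fun k => mul_nonneg c.2 (hnn k), ?_⟩
        simp only [mul_smul, ← Finset.smul_sum, hsum]
        exact (NNReal.smul_def c x).symm
      isClosed' := hcl }
  have hgK : g ∉ K := fun hg => by
    obtain ⟨lam, hnn, hsum⟩ := (hg : g ∈ fgCone v)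
    exact hcon ⟨lam, hnn, hsum.symm⟩
  obtain ⟨d, hd1, hd2⟩ := K.hyperplane_separation' hgK
  have := h d fun k => hd1 (v k) (hvC k)
  linarith

end FarkasCone




variable {n : ℕ} (G : SimpleGraph (Fin n)) [DecidableRel G.Adj]

lemma sum_swap_adj (f : Fin n → Fin n → ℝ) :
    ∑ i, ∑ j, (if G.Adj i j then f i j else 0)
      = ∑ i, ∑ j, (if G.Adj i j then f j i else 0) := by
  rw [Finset.sum_comm]
  refine Finset.sum_congr rfl fun i _ => Finset.sum_congr rfl fun j _ => ?_
  exact if_congr (G.adj_comm j i) rfl rfl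

lemma lap_mulVec (s : Fin n → ℝ) (i : Fin n) :
    (lap G).mulVec s i = ∑ j, (if G.Adj i j then s i - s j else 0) := by
  have hdiag : ∀ j, lap G i j * s j
      = (if i = j then ((Finset.univ.filter fun k => G.Adj i k).card : ℝ) * s j else 0)
        + (if G.Adj i j then -(s j) else 0) := by
    intro j
    by_cases hij : i = j
    · subst hij
      simp [lap, SimpleGraph.irrefl]
    · simp only [lap, Matrix.of_apply, if_neg hij]
      split_ifs with h <;> ring
  have hsplit : ∀ j, (if G.Adj i j then s i - s j else 0)
      = (if G.Adj i j then s i else 0) + (if G.Adj i j then -(s j) else 0) := by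
    intro j; split_ifs <;> ring
  show ∑ j, lap G i j * s j = _
  simp only [hdiag, hsplit, Finset.sum_add_distrib, Finset.sum_ite_eq]
  congr 1
  rw [← Finset.sum_filter, Finset.sum_const, nsmul_eq_mul]
  simp

lemma cross_sum (A : Fin n → Fin n → ℝ)
    (hanti : ∀ i j, G.Adj i j → Real.log (A j i) = - Real.log (A i j))
    (s d : Fin n → ℝ) :
    ∑ i, ∑ j, (if G.Adj i j then 2*(Real.log (A i j) - s i + s j)*(d j - d i) else 0)
      = 4 * ∑ i, d i * ((lap G).mulVec s i
          - ∑ j, (if G.Adj i j then Real.log (A i j) else 0)) := by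
  have key : ∀ i, ∑ j, (if G.Adj i j then -(4*(Real.log (A i j) - s i + s j) * d i) else 0)
      = 4 * (d i * ((lap G).mulVec s i
          - ∑ j, (if G.Adj i j then Real.log (A i j) else 0))) := by
    intro i
    rw [lap_mulVec G s i]
    have hterm : ∀ j, (if G.Adj i j then -(4*(Real.log (A i j) - s i + s j) * d i) else 0)
        = 4 * (d i * ((if G.Adj i j then s i - s j else 0)
            - (if G.Adj i j then Real.log (A i j) else 0))) := by
      intro j; split_ifs <;> ring
    simp only [hterm]
    rw [← Finset.sum_sub_distrib, Finset.mul_sum, Finset.mul_sum]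
  have hS1 : ∑ i, ∑ j, (if G.Adj i j then 2*(Real.log (A i j) - s i + s j) * d j else 0)
      = ∑ i, ∑ j, (if G.Adj i j then -(2*(Real.log (A i j) - s i + s j) * d i) else 0) := by
    rw [sum_swap_adj G (fun i j => 2*(Real.log (A i j) - s i + s j) * d j)]
    refine Finset.sum_congr rfl fun i _ => Finset.sum_congr rfl fun j _ => ?_
    split_ifs with h
    · rw [hanti i j h]; ring
    · rfl
  calc ∑ i, ∑ j, (if G.Adj i j then 2*(Real.log (A i j) - s i + s j)*(d j - d i) else 0)
      = ∑ i, ∑ j, ((if G.Adj i j then 2*(Real.log (A i j) - s i + s j) * d j else 0)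
          + (if G.Adj i j then -(2*(Real.log (A i j) - s i + s j) * d i) else 0)) := by
        refine Finset.sum_congr rfl fun i _ => Finset.sum_congr rfl fun j _ => ?_
        split_ifs <;> ring
    _ = (∑ i, ∑ j, (if G.Adj i j then 2*(Real.log (A i j) - s i + s j) * d j else 0))
          + ∑ i, ∑ j, (if G.Adj i j then -(2*(Real.log (A i j) - s i + s j) * d i) else 0) := by
        simp [Finset.sum_add_distrib]
    _ = ∑ i, ∑ j, ((if G.Adj i j then -(2*(Real.log (A i j) - s i + s j) * d i) else 0)
          + (if G.Adj i j then -(2*(Real.log (A i j) - s i + s j) * d i) else 0)) := by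
        rw [hS1]; simp [Finset.sum_add_distrib]
    _ = ∑ i, ∑ j, (if G.Adj i j then -(4*(Real.log (A i j) - s i + s j) * d i) else 0) := by
        refine Finset.sum_congr rfl fun i _ => Finset.sum_congr rfl fun j _ => ?_
        split_ifs <;> ring
    _ = ∑ i, 4 * (d i * ((lap G).mulVec s i
          - ∑ j, (if G.Adj i j then Real.log (A i j) else 0))) :=
        Finset.sum_congr rfl fun i _ => key i
    _ = 4 * ∑ i, d i * ((lap G).mulVec s i
          - ∑ j, (if G.Adj i j then Real.log (A i j) else 0)) := by
        rw [Finset.mul_sum]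

lemma loss_expand (A : Fin n → Fin n → ℝ)
    (hanti : ∀ i j, G.Adj i j → Real.log (A j i) = - Real.log (A i j))
    (s d : Fin n → ℝ) :
    lossLLS G A (fun i => s i + d i) = lossLLS G A s
      + 4 * ∑ i, d i * ((lap G).mulVec s i
          - ∑ j, (if G.Adj i j then Real.log (A i j) else 0))
      + ∑ i, ∑ j, (if G.Adj i j then (d j - d i)^2 else 0) := by
  have hterm : ∀ i j, (if G.Adj i j then (Real.log (A i j) - (s i + d i) + (s j + d j))^2 else 0)
      = (if G.Adj i j then (Real.log (A i j) - s i + s j)^2 else 0)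
        + (if G.Adj i j then 2*(Real.log (A i j) - s i + s j)*(d j - d i) else 0)
        + (if G.Adj i j then (d j - d i)^2 else 0) := by
    intro i j; split_ifs <;> ring
  unfold lossLLS
  simp only [hterm, Finset.sum_add_distrib]
  rw [cross_sum G A hanti s d]

end Aux

/-- **KKT characterization of the global optimum of Problem 2.**
Given an incomplete pairwise comparison matrix `𝒜` with connected graph `G`, an
optimal solution `x*` of Problem 1 and `ε > 0`, a point `y*` satisfying the
constraints of Problem 2 is a global optimum of Problem 2 if and only if there is
a matrix `Λ*` of Lagrange multipliers with `Λ*_ij ≥ 0`, `Λ*_ij = 0` whenever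
`x*_ij = 0`, complementary slackness `Λ*_ij (y*_j − y*_i + ε) = 0` on the active
index pairs, and `L y* = ½ (Λ* − Λ*ᵀ) 1ₙ + r`, where `r_i = Σ_{j ∈ N_i} ln 𝒜_ij`. -/
theorem problem2_global_optimality_KKT
    {n : ℕ} (G : SimpleGraph (Fin n)) [DecidableRel G.Adj] (hconn : G.Connected)
    (A : Fin n → Fin n → ℝ)
    (hpos : ∀ i j, G.Adj i j → 0 < A i j)
    (hrec : ∀ i j, G.Adj i j → A j i = 1 / A i j)
    (hzero : ∀ i j, ¬ G.Adj i j → A i j = 0)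
    (δ : ℝ) (hδ : 0 < δ)
    (xs : Fin n → Fin n → ℝ) (hfeas : Feasible xs)
    (hopt : ∀ y, Feasible y →
      sigmaIdx G A y + tieIdx G A δ y ≤ sigmaIdx G A xs + tieIdx G A δ xs)
    (ε : ℝ) (hε : 0 < ε)
    (ystar : Fin n → ℝ)
    (hycon : ∀ i j, i ≠ j → xs i j = 1 → ystar j + ε ≤ ystar i) :
    (∀ y : Fin n → ℝ, (∀ i j, i ≠ j → xs i j = 1 → y j + ε ≤ y i) →
        lossLLS G A ystar ≤ lossLLS G A y) ↔
      ∃ Λ : Matrix (Fin n) (Fin n) ℝ,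
        (∀ i j, 0 ≤ Λ i j) ∧
        (∀ i j, xs i j = 0 → Λ i j = 0) ∧
        (∀ i j, i ≠ j → xs i j = 1 → Λ i j * (ystar j - ystar i + ε) = 0) ∧
        (lap G).mulVec ystar =
          ((1 : ℝ) / 2) • ((Λ - Λ.transpose).mulVec (fun _ => 1)) +
            (fun i => ∑ j : Fin n, if G.Adj i j then Real.log (A i j) else 0) := by
  classical
  have hanti : ∀ i j, G.Adj i j → Real.log (A j i) = - Real.log (A i j) := by
    intro i j h
    rw [hrec i j h, one_div, Real.log_inv]
  constructor
  · -- optimality implies existence of multipliers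
    intro hglob
    set P : Fin n × Fin n → Prop :=
      fun p => p.1 ≠ p.2 ∧ xs p.1 p.2 = 1 ∧ ystar p.1 = ystar p.2 + ε with hP
    haveI : Fintype {p // P p} := Fintype.ofFinite _
    set w : Fin n × Fin n → (Fin n → ℝ) :=
      fun q x => (if x = q.1 then (1:ℝ) else 0) - (if x = q.2 then 1 else 0) with hw
    set v : {p // P p} → EuclideanSpace ℝ (Fin n) := fun p => WithLp.toLp 2 (w p.1) with hv
    have hinner : ∀ x y : EuclideanSpace ℝ (Fin n),
        (inner ℝ x y : ℝ) = ∑ q, x q * y q := fun x y => by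
      simp [PiLp.inner_apply, RCLike.inner_apply, mul_comm]
    -- the first-order optimality condition
    have hderiv : ∀ d : Fin n → ℝ,
        (∀ i j, i ≠ j → xs i j = 1 → ystar i = ystar j + ε → d j ≤ d i) →
        0 ≤ ∑ i, d i * ((lap G).mulVec ystar i
            - ∑ j, (if G.Adj i j then Real.log (A i j) else 0)) := by
      intro d hd
      set S := ∑ i, d i * ((lap G).mulVec ystar i
          - ∑ j, (if G.Adj i j then Real.log (A i j) else 0)) with hS
      set Qd := ∑ i, ∑ j, (if G.Adj i j then (d j - d i)^2 else 0) with hQd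
      have hev : ∀ᶠ t in nhdsWithin (0:ℝ) (Set.Ioi 0), ∀ i, ∀ j, i ≠ j → xs i j = 1 →
          (ystar j + t * d j) + ε ≤ ystar i + t * d i := by
        rw [Filter.eventually_all]
        intro i
        rw [Filter.eventually_all]
        intro j
        by_cases hij : i = j
        · exact Filter.Eventually.of_forall fun t h => absurd hij h
        by_cases hxs : xs i j = 1
        · by_cases hact : ystar i = ystar j + ε
          · filter_upwards [self_mem_nhdsWithin] with t ht _ _
            have hdj := hd i j hij hxs hact
            have ht' : (0:ℝ) < t := ht
            nlinarith
          · have hslack : ystar j + ε < ystar i :=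
              lt_of_le_of_ne (hycon i j hij hxs) fun hc => hact hc.symm
            have hcont : Filter.Tendsto
                (fun t : ℝ => ystar j + t * d j + ε - (ystar i + t * d i))
                (nhdsWithin (0:ℝ) (Set.Ioi 0)) (nhds (ystar j + ε - ystar i)) := by
              apply Filter.Tendsto.mono_left _ nhdsWithin_le_nhds
              have hc : Continuous fun t : ℝ =>
                  ystar j + t * d j + ε - (ystar i + t * d i) :=
                ((continuous_const.add (continuous_id'.mul continuous_const)).add
                  continuous_const).sub
                  (continuous_const.add (continuous_id'.mul continuous_const))
              simpa using hc.tendsto 0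
            have hneg : ystar j + ε - ystar i < 0 := by linarith
            filter_upwards [hcont.eventually_lt_const hneg] with t ht _ _
            linarith
        · exact Filter.Eventually.of_forall fun t _ h2 => absurd h2 hxs
      have hev2 : ∀ᶠ t in nhdsWithin (0:ℝ) (Set.Ioi 0), 0 ≤ 4 * S + t * Qd := by
        filter_upwards [hev, self_mem_nhdsWithin] with t hfeas' ht
        have ht' : (0:ℝ) < t := ht
        have hloss := hglob (fun i => ystar i + t * d i)
          (fun i j hij hxs => hfeas' i j hij hxs)
        have hexp := loss_expand G A hanti ystar (fun i => t * d i)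
        have h1 : ∑ i, (t * d i) * ((lap G).mulVec ystar i
            - ∑ j, (if G.Adj i j then Real.log (A i j) else 0)) = t * S := by
          rw [hS, Finset.mul_sum]
          exact Finset.sum_congr rfl fun i _ => by ring
        have h2 : ∑ i, ∑ j, (if G.Adj i j then ((t * d j) - (t * d i))^2 else 0)
            = t^2 * Qd := by
          rw [hQd, Finset.mul_sum]
          refine Finset.sum_congr rfl fun i _ => ?_
          rw [Finset.mul_sum]
          refine Finset.sum_congr rfl fun j _ => ?_
          split_ifs <;> ring
        rw [h1, h2] at hexp
        rw [hexp] at hloss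
        nlinarith
      have hlim : Filter.Tendsto (fun t : ℝ => 4 * S + t * Qd)
          (nhdsWithin (0:ℝ) (Set.Ioi 0)) (nhds (4 * S)) := by
        apply Filter.Tendsto.mono_left _ nhdsWithin_le_nhds
        have hc : Continuous fun t : ℝ => 4 * S + t * Qd :=
          continuous_const.add (continuous_id'.mul continuous_const)
        simpa using hc.tendsto 0
      have h4S : 0 ≤ 4 * S := ge_of_tendsto hlim hev2
      linarith
    -- apply Farkas' lemma
    obtain ⟨lam, hlamnn, hlamsum⟩ :
        ∃ lam : {p // P p} → ℝ, (∀ k, 0 ≤ lam k) ∧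
          (WithLp.toLp 2 (fun i => (lap G).mulVec ystar i
            - ∑ j, (if G.Adj i j then Real.log (A i j) else 0))
              : EuclideanSpace ℝ (Fin n)) = ∑ k, lam k • v k := by
      apply farkas_lemma
      intro dvec hdvec
      have hvk : ∀ k : {p // P p}, (inner ℝ (v k) dvec : ℝ) = dvec k.1.1 - dvec k.1.2 := by
        intro k
        rw [hinner]
        simp only [hv, hw]
        simp [sub_mul, Finset.sum_sub_distrib, ite_mul, one_mul, zero_mul,
          Finset.sum_ite_eq', PiLp.toLp_apply]
      rw [hinner]
      have hdcond : ∀ i j, i ≠ j → xs i j = 1 → ystar i = ystar j + ε →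
          dvec j ≤ dvec i := by
        intro i j hij hxs hact
        have := hdvec ⟨(i, j), ⟨hij, hxs, hact⟩⟩
        rw [hvk] at this
        linarith
      have := hderiv (fun q => dvec q) hdcond
      calc (0:ℝ) ≤ _ := this
        _ = ∑ q, (fun i => (lap G).mulVec ystar i
            - ∑ j, (if G.Adj i j then Real.log (A i j) else 0)) q * dvec q :=
          Finset.sum_congr rfl fun q _ => by ring
    set lam' : Fin n × Fin n → ℝ := fun q => if h : P q then lam ⟨q, h⟩ else 0 with hlam'
    refine ⟨Matrix.of fun i j => 2 * lam' (i, j), ?_, ?_, ?_, ?_⟩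
    · intro i j
      simp only [Matrix.of_apply, hlam']
      split_ifs with h
      · have := hlamnn ⟨(i, j), h⟩; linarith
      · norm_num
    · intro i j hx0
      simp only [Matrix.of_apply, hlam']
      rw [dif_neg, mul_zero]
      rintro ⟨-, hxs1, -⟩
      rw [hx0] at hxs1
      exact zero_ne_one hxs1
    · intro i j hij hxs
      simp only [Matrix.of_apply, hlam']
      by_cases hact : ystar i = ystar j + ε
      · have : ystar j - ystar i + ε = 0 := by rw [hact]; ring
        rw [this, mul_zero]
      · rw [dif_neg, mul_zero, zero_mul]
        rintro ⟨-, -, h⟩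
        exact hact h
    · funext i
      have hGvi := congrArg (fun z : EuclideanSpace ℝ (Fin n) => z i) hlamsum
      have hsum_apply : (∑ k, lam k • v k) i = ∑ k, lam k * v k i := by
        rw [WithLp.ofLp_sum, Finset.sum_apply]
        exact Finset.sum_congr rfl fun k _ => rfl
      rw [hsum_apply] at hGvi
      -- convert the subtype sum into a sum over all pairs
      have step1 : ∑ q : Fin n × Fin n, lam' q * w q i = ∑ k, lam k * v k i := by
        rw [← Finset.sum_filter_of_ne (p := P)
          (f := fun q => lam' q * w q i) (fun q _ hq => by
            by_contra hPq
            exact hq (by simp [hlam', dif_neg hPq])),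
          Finset.sum_subtype (p := P) _ (fun q => by simp) (fun q => lam' q * w q i)]
        refine Finset.sum_congr rfl fun k _ => ?_
        simp only [hlam', hv, dif_pos k.2]
      have step2 : ∑ q : Fin n × Fin n, lam' q * w q i
          = (∑ b, lam' (i, b)) - (∑ a, lam' (a, i)) := by
        rw [Fintype.sum_prod_type]
        calc ∑ a, ∑ b, lam' (a, b) * w (a, b) i
            = ∑ a, ∑ b, ((if i = a then lam' (a, b) else 0)
                - (if i = b then lam' (a, b) else 0)) := by
              refine Finset.sum_congr rfl fun a _ => Finset.sum_congr rfl fun b _ => ?_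
              simp only [hw]
              split_ifs <;> ring
          _ = (∑ a, ∑ b, (if i = a then lam' (a, b) else 0))
                - ∑ a, ∑ b, (if i = b then lam' (a, b) else 0) := by
              simp [Finset.sum_sub_distrib]
          _ = (∑ b, lam' (i, b)) - (∑ a, lam' (a, i)) := by
              congr 1
              · rw [Finset.sum_comm]
                exact Finset.sum_congr rfl fun b _ => by simp
              · exact Finset.sum_congr rfl fun a _ => by simp
      have hkey : (lap G).mulVec ystar i
          - ∑ j, (if G.Adj i j then Real.log (A i j) else 0)
          = (∑ b, lam' (i, b)) - (∑ a, lam' (a, i)) := by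
        rw [← step2, step1]
        exact hGvi
      have hmv : ((Matrix.of fun i j => 2 * lam' (i, j))
          - (Matrix.of fun i j => 2 * lam' (i, j)).transpose).mulVec (fun _ => (1:ℝ)) i
          = ∑ j, (2 * lam' (i, j) - 2 * lam' (j, i)) := by
        simp [Matrix.mulVec, dotProduct, Matrix.sub_apply, Matrix.transpose_apply]
      rw [Pi.add_apply, Pi.smul_apply, hmv, smul_eq_mul]
      have hsplit : ∑ j, (2 * lam' (i, j) - 2 * lam' (j, i))
          = 2 * (∑ b, lam' (i, b)) - 2 * (∑ a, lam' (a, i)) := by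
        rw [Finset.sum_sub_distrib, ← Finset.mul_sum, ← Finset.mul_sum]
      rw [hsplit]
      have := hkey
      linarith [hkey]
  · -- multipliers imply optimality
    rintro ⟨Λ, hnn, h0, hcs, heq⟩ y hy
    set d : Fin n → ℝ := fun i => y i - ystar i with hd
    have hGv : ∀ i, (lap G).mulVec ystar i
        - ∑ j, (if G.Adj i j then Real.log (A i j) else 0)
        = (1/2) * ∑ j, (Λ i j - Λ j i) := by
      intro i
      have h1 := congrFun heq i
      have hmv : ((Λ - Λ.transpose).mulVec fun _ => (1:ℝ)) i = ∑ j, (Λ i j - Λ j i) := by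
        simp [Matrix.mulVec, dotProduct, Matrix.sub_apply, Matrix.transpose_apply]
      rw [Pi.add_apply, Pi.smul_apply, hmv, smul_eq_mul] at h1
      rw [h1]
      ring
    have hterm : ∀ i j, 0 ≤ Λ i j * (d i - d j) := by
      intro i j
      rcases eq_or_ne i j with rfl | hij
      · simp
      rcases eq_or_ne (Λ i j) 0 with hz | hz
      · simp [hz]
      have hxs : xs i j = 1 := by
        rcases hfeas.1 i j hij with h' | h'
        · exact absurd (h0 i j h') hz
        · exact h'
      have hact : ystar j - ystar i + ε = 0 := by
        rcases mul_eq_zero.mp (hcs i j hij hxs) with h' | h'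
        · exact absurd h' hz
        · exact h'
      have hyf := hy i j hij hxs
      have hdij : 0 ≤ d i - d j := by
        simp only [hd]
        linarith
      exact mul_nonneg (hnn i j) hdij
    have hsum : 0 ≤ ∑ i, d i * ((lap G).mulVec ystar i
        - ∑ j, (if G.Adj i j then Real.log (A i j) else 0)) := by
      have e1 : ∑ i, d i * ((lap G).mulVec ystar i
          - ∑ j, (if G.Adj i j then Real.log (A i j) else 0))
          = (1/2) * ∑ i, ∑ j, (Λ i j * d i - Λ j i * d i) := by
        rw [Finset.mul_sum]
        refine Finset.sum_congr rfl fun i _ => ?_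
        rw [hGv i, show (∑ j, (Λ i j * d i - Λ j i * d i))
          = (∑ j, (Λ i j - Λ j i)) * d i by
            rw [Finset.sum_mul]
            exact Finset.sum_congr rfl fun j _ => by ring]
        ring
      have e2 : ∑ i, ∑ j, (Λ j i * d i) = ∑ i, ∑ j, (Λ i j * d j) := Finset.sum_comm
      have e3 : ∑ i, ∑ j, (Λ i j * d i - Λ j i * d i)
          = ∑ i, ∑ j, Λ i j * (d i - d j) := by
        simp only [Finset.sum_sub_distrib]
        rw [e2]
        simp only [← Finset.sum_sub_distrib]
        exact Finset.sum_congr rfl fun i _ => Finset.sum_congr rfl fun j _ => by ring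
      rw [e1, e3]
      have : 0 ≤ ∑ i, ∑ j, Λ i j * (d i - d j) :=
        Finset.sum_nonneg fun i _ => Finset.sum_nonneg fun j _ => hterm i j
      linarith
    have hyeq : y = fun i => ystar i + d i := by
      funext i
      simp [hd]
    rw [hyeq, loss_expand G A hanti ystar d]
    have hQ : 0 ≤ ∑ i, ∑ j, (if G.Adj i j then (d j - d i)^2 else 0) :=
      Finset.sum_nonneg fun i _ => Finset.sum_nonneg fun j _ => by positivity
    linarith
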